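/- There exist δ₀ > 0, an integer N₀ and a constant C > 0 such that for every δ with |δ| ≤ δ₀ and every N > N₀: ‖B(δ)‖/μ ≤ (|δ|·‖HEᵀ + EHᵀ‖ + δ²·‖EEᵀ‖)/μ ≤ C·(δ² + |δ|/N), and in particular ‖B(δ)‖/μ < 1/4. -/

import Mathlib

open Filter Matrix
open Finset

/-- Hankelization (diagonal averaging): the `j`-th value is the average of the
entries `Y i k` with `i + k = j`. -/
noncomputable def hankelize {L K : ℕ} (Y : Matrix (Fin L) (Fin K) ℝ) (j : ℕ) : ℝ :=
  (∑ i : Fin L, ∑ k : Fin K, if (i : ℕ) + (k : ℕ) = j then Y i k else 0) /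
  (∑ i : Fin L, ∑ k : Fin K, if (i : ℕ) + (k : ℕ) = j then (1 : ℝ) else 0)

/-- Squared Euclidean norm of a vector. -/
noncomputable def normSq {M : ℕ} (w : Fin M → ℝ) : ℝ := ∑ i, w i ^ 2

/-- `u` is a unit eigenvector of `A` corresponding to its largest eigenvalue. -/
def IsTopEigenvector {L : ℕ} (A : Matrix (Fin L) (Fin L) ℝ) (u : Fin L → ℝ) : Prop :=
  normSq u = 1 ∧ ∃ μ : ℝ, A.mulVec u = μ • u ∧
    ∀ (ν : ℝ) (v : Fin L → ℝ), v ≠ 0 → A.mulVec v = ν • v → ν ≤ μ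

/-- The discretized exponential signal `x_n = a^{nT/N}`. -/
noncomputable def xdisc (a T : ℝ) (N : ℕ) : ℕ → ℝ := fun n => a ^ ((n : ℝ) * T / (N : ℝ))

/-- The `L × K` Hankel matrix of the discretized signal. -/
noncomputable def Hd (a T : ℝ) (N L K : ℕ) : Matrix (Fin L) (Fin K) ℝ :=
  Matrix.of fun i k => xdisc a T N ((i : ℕ) + (k : ℕ))

/-- The `L × K` Hankel matrix of the harmonic noise `e_n = cos(ξ n + φ)`. -/
noncomputable def Ed (ξ φ : ℝ) (L K : ℕ) : Matrix (Fin L) (Fin K) ℝ :=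
  Matrix.of fun i k => Real.cos (ξ * (((i : ℕ) + (k : ℕ) : ℕ) : ℝ) + φ)

/-- The vector `W_M = (1, a^{T/N}, …, a^{(M-1)T/N})ᵀ`. -/
noncomputable def Wd (a T : ℝ) (N M : ℕ) : Fin M → ℝ := fun i => a ^ (((i : ℕ) : ℝ) * T / (N : ℝ))

/-- `B(δ) = δ(HEᵀ + EHᵀ) + δ²EEᵀ`. -/
noncomputable def Bmat (a T ξ φ δ : ℝ) (N L K : ℕ) : Matrix (Fin L) (Fin L) ℝ :=
  δ • (Hd a T N L K * (Ed ξ φ L K)ᵀ + Ed ξ φ L K * (Hd a T N L K)ᵀ)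
  + δ ^ 2 • (Ed ξ φ L K * (Ed ξ φ L K)ᵀ)

/-- The spectral (ℓ²-operator) norm of a matrix. -/
noncomputable def specNorm {m n : ℕ} (A : Matrix (Fin m) (Fin n) ℝ) : ℝ :=
  ‖(Matrix.toEuclideanLin A).toContinuousLinearMap‖

/-- The max-norm of a matrix: the maximum of the absolute values of its entries. -/
noncomputable def maxNorm {m n : ℕ} (A : Matrix (Fin m) (Fin n) ℝ) : ℝ :=
  ⨆ p : Fin m × Fin n, |A p.1 p.2|


section auxlems



lemma specNorm_add_le {m n : ℕ} (A B : Matrix (Fin m) (Fin n) ℝ) :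
    specNorm (A + B) ≤ specNorm A + specNorm B := by
  unfold specNorm
  rw [map_add, map_add]
  exact norm_add_le _ _

lemma specNorm_smul_le {m n : ℕ} (c : ℝ) (A : Matrix (Fin m) (Fin n) ℝ) :
    specNorm (c • A) ≤ |c| * specNorm A := by
  unfold specNorm
  rw [_root_.map_smul, _root_.map_smul]
  simpa using ContinuousLinearMap.opNorm_smul_le c (Matrix.toEuclideanLin A).toContinuousLinearMap

lemma specNorm_le_sqrt {m n : ℕ} (A : Matrix (Fin m) (Fin n) ℝ) :
    specNorm A ≤ Real.sqrt (∑ i, ∑ j, A i j ^ 2) := by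
  apply ContinuousLinearMap.opNorm_le_bound _ (Real.sqrt_nonneg _)
  intro x
  have hx : ‖x‖ = Real.sqrt (∑ j, (WithLp.equiv 2 (Fin n → ℝ) x j) ^ 2) := by
    rw [EuclideanSpace.norm_eq]
    congr 1
    refine Finset.sum_congr rfl fun j _ => ?_
    rw [Real.norm_eq_abs, sq_abs]
    rfl
  set y := WithLp.equiv 2 (Fin n → ℝ) x with hy
  have happ : ∀ i, (Matrix.toEuclideanLin A).toContinuousLinearMap x i = ∑ j, A i j * y j := by
    intro i
    rfl
  rw [EuclideanSpace.norm_eq, hx, ← Real.sqrt_mul (by positivity)]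
  apply Real.sqrt_le_sqrt
  rw [Finset.sum_mul]
  refine Finset.sum_le_sum fun i _ => ?_
  rw [Real.norm_eq_abs, sq_abs, happ]
  exact Finset.sum_mul_sq_le_sq_mul_sq _ _ _

lemma specNorm_le_of_sq {m n : ℕ} (A : Matrix (Fin m) (Fin n) ℝ) (c : ℝ) (hc : 0 ≤ c)
    (h : ∑ i, ∑ j, A i j ^ 2 ≤ c ^ 2) : specNorm A ≤ c := by
  refine (specNorm_le_sqrt A).trans ?_
  calc Real.sqrt (∑ i, ∑ j, A i j ^ 2) ≤ Real.sqrt (c ^ 2) := Real.sqrt_le_sqrt h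
    _ = c := Real.sqrt_sq hc

lemma specNorm_le_of_entry_bound {m n : ℕ} (A : Matrix (Fin m) (Fin n) ℝ) (c : ℝ) (hc : 0 ≤ c)
    (h : ∀ i j, |A i j| ≤ c) : specNorm A ≤ Real.sqrt ((m : ℝ) * n) * c := by
  apply specNorm_le_of_sq _ _ (by positivity)
  have hsq : ∀ i j, A i j ^ 2 ≤ c ^ 2 := fun i j => by
    rw [← sq_abs]; exact pow_le_pow_left₀ (abs_nonneg _) (h i j) 2
  calc ∑ i, ∑ j, A i j ^ 2 ≤ ∑ _i : Fin m, ∑ _j : Fin n, c ^ 2 :=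
        Finset.sum_le_sum (fun i _ => Finset.sum_le_sum fun j _ => hsq i j)
    _ = (m : ℝ) * n * c ^ 2 := by
        simp [Finset.sum_const, Finset.card_univ]; ring
    _ = (Real.sqrt ((m : ℝ) * n) * c) ^ 2 := by
        rw [mul_pow, Real.sq_sqrt (by positivity)]

lemma abel_bound (Kn : ℕ) (b c : ℕ → ℝ) (S B : ℝ) (hS : 0 ≤ S) (hB : 0 ≤ B)
    (hmono : Monotone b) (hb0 : 0 ≤ b 0) (hbB : ∀ k < Kn, b k ≤ B)
    (hc : ∀ m, |∑ k ∈ range m, c k| ≤ S) :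
    |∑ k ∈ range Kn, b k * c k| ≤ 2 * S * B := by
  rcases Nat.eq_zero_or_pos Kn with h0 | hpos
  · simp [h0]; positivity
  have hby := Finset.sum_range_by_parts b c Kn
  simp only [smul_eq_mul] at hby
  rw [hby]
  have h1 : |b (Kn - 1) * ∑ i ∈ range Kn, c i| ≤ S * B := by
    rw [abs_mul]
    have hbK : 0 ≤ b (Kn - 1) := hb0.trans (hmono (Nat.zero_le _))
    rw [abs_of_nonneg hbK]
    calc b (Kn - 1) * |∑ i ∈ range Kn, c i| ≤ b (Kn - 1) * S :=
          mul_le_mul_of_nonneg_left (hc Kn) hbK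
      _ ≤ B * S := mul_le_mul_of_nonneg_right (hbB _ (Nat.sub_lt hpos one_pos)) hS
      _ = S * B := mul_comm _ _
  have h2 : |∑ i ∈ range (Kn - 1), (b (i + 1) - b i) * ∑ j ∈ range (i + 1), c j| ≤ S * B := by
    calc |∑ i ∈ range (Kn - 1), (b (i + 1) - b i) * ∑ j ∈ range (i + 1), c j|
        ≤ ∑ i ∈ range (Kn - 1), |(b (i + 1) - b i) * ∑ j ∈ range (i + 1), c j| :=
          Finset.abs_sum_le_sum_abs _ _
      _ ≤ ∑ i ∈ range (Kn - 1), (b (i + 1) - b i) * S := by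
          refine Finset.sum_le_sum fun i _ => ?_
          rw [abs_mul, abs_of_nonneg (sub_nonneg.2 (hmono (Nat.le_succ i)))]
          exact mul_le_mul_of_nonneg_left (hc _) (sub_nonneg.2 (hmono (Nat.le_succ i)))
      _ = (b (Kn - 1) - b 0) * S := by
          rw [← Finset.sum_mul, Finset.sum_range_sub b]
      _ ≤ B * S := by
          apply mul_le_mul_of_nonneg_right _ hS
          have := hbB _ (Nat.sub_lt hpos one_pos)
          linarith
      _ = S * B := mul_comm _ _
  calc |b (Kn - 1) * ∑ i ∈ range Kn, c i -
        ∑ i ∈ range (Kn - 1), (b (i + 1) - b i) * ∑ j ∈ range (i + 1), c j|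
      ≤ |b (Kn - 1) * ∑ i ∈ range Kn, c i| +
        |∑ i ∈ range (Kn - 1), (b (i + 1) - b i) * ∑ j ∈ range (i + 1), c j| := abs_sub _ _
    _ ≤ S * B + S * B := add_le_add h1 h2
    _ = 2 * S * B := by ring

lemma cos_sum_bound {ξ : ℝ} (hξ : ξ ∈ Set.Ioo 0 Real.pi) (θ : ℝ) (m : ℕ) :
    |∑ k ∈ range m, Real.cos (θ + ξ * k)| ≤ 2 / Real.sqrt (2 - 2 * Real.cos ξ) := by
  have hcos : Real.cos ξ < 1 := by
    have := Real.cos_lt_cos_of_nonneg_of_le_pi le_rfl hξ.2.le hξ.1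
    simpa using this
  have hpos : (0:ℝ) < 2 - 2 * Real.cos ξ := by linarith
  set z : ℂ := Complex.exp (ξ * Complex.I) with hz
  have hzne : z ≠ 1 := by
    intro h
    have : z.re = 1 := by rw [h]; simp
    rw [hz, Complex.exp_ofReal_mul_I_re] at this
    linarith
  have habs_z : ‖z‖ = 1 := by
    rw [hz]; exact Complex.norm_exp_ofReal_mul_I ξ
  have hre : (∑ k ∈ range m, Real.cos (θ + ξ * k)) =
      (Complex.exp (θ * Complex.I) * ∑ k ∈ range m, z ^ k).re := by
    rw [Finset.mul_sum, Complex.re_sum]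
    refine Finset.sum_congr rfl fun k _ => ?_
    rw [hz, ← Complex.exp_nat_mul, ← Complex.exp_add]
    have : (θ:ℂ) * Complex.I + (k:ℕ) * ((ξ:ℂ) * Complex.I) = ((θ + ξ * k : ℝ) : ℂ) * Complex.I := by
      push_cast; ring
    rw [this, Complex.exp_ofReal_mul_I_re]
  rw [hre]
  have h1 : |(Complex.exp (θ * Complex.I) * ∑ k ∈ range m, z ^ k).re| ≤
      ‖Complex.exp (θ * Complex.I) * ∑ k ∈ range m, z ^ k‖ :=
    Complex.abs_re_le_norm _
  refine h1.trans ?_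
  rw [norm_mul, Complex.norm_exp_ofReal_mul_I, one_mul]
  rw [geom_sum_eq hzne]
  rw [norm_div]
  have hden : ‖z - 1‖ = Real.sqrt (2 - 2 * Real.cos ξ) := by
    have hre' : (z - 1).re = Real.cos ξ - 1 := by
      simp [hz, Complex.exp_ofReal_mul_I_re]
    have him : (z - 1).im = Real.sin ξ := by
      simp [hz, Complex.exp_ofReal_mul_I_im]
    rw [Complex.norm_def, Complex.normSq_apply, hre', him]
    congr 1
    linear_combination Real.sin_sq_add_cos_sq ξ
  rw [hden]
  have hnum : ‖z ^ m - 1‖ ≤ 2 := by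
    calc ‖z ^ m - 1‖ ≤ ‖z ^ m‖ + ‖(1:ℂ)‖ := by
          rw [sub_eq_add_neg]
          simpa using norm_add_le (z ^ m) (-1)
      _ ≤ 2 := by rw [norm_pow, habs_z, one_pow, norm_one]; norm_num
  have hd : 0 < Real.sqrt (2 - 2 * Real.cos ξ) := Real.sqrt_pos.2 hpos
  gcongr


lemma specNorm_nonneg' {m n : ℕ} (A : Matrix (Fin m) (Fin n) ℝ) : 0 ≤ specNorm A :=
  norm_nonneg _

lemma div_le_div_of_nonneg_right' {a b c : ℝ} (h : a ≤ b) (hc : 0 < c) : a / c ≤ b / c :=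
  (div_le_div_iff_of_pos_right hc).2 h


end auxlems

set_option maxHeartbeats 1000000 in
/-- in the discretization scheme, `‖B(δ)‖/μ ≤ B(δ)/μ ≤ C(δ² + |δ|/N)`
and in particular `‖B(δ)‖/μ < 1/4` for small `δ` and large `N`. -/
theorem stmt_9 (a T ξ φ α : ℝ) (ha : 1 < a) (hT : 0 < T)
    (hξ : ξ ∈ Set.Ioo 0 Real.pi) (hφ : φ ∈ Set.Ico 0 (2 * Real.pi))
    (hα : α ∈ Set.Ioo (0 : ℝ) 1)
    (L K : ℕ → ℕ)
    (hLK : ∀ N, 3 ≤ N → 1 < L N ∧ 1 < K N ∧ L N + K N = N + 1)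
    (hlim : Tendsto (fun N : ℕ => (L N : ℝ) / (N : ℝ)) atTop (nhds α)) :
    ∃ δ₀ > (0 : ℝ), ∃ N₀ : ℕ, ∃ C > (0 : ℝ), ∀ δ : ℝ, |δ| ≤ δ₀ → ∀ N : ℕ, N₀ < N →
      specNorm (Bmat a T ξ φ δ N (L N) (K N)) /
          (normSq (Wd a T N (L N)) * normSq (Wd a T N (K N))) ≤
        (|δ| * specNorm (Hd a T N (L N) (K N) * (Ed ξ φ (L N) (K N))ᵀ +
            Ed ξ φ (L N) (K N) * (Hd a T N (L N) (K N))ᵀ) +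
          δ ^ 2 * specNorm (Ed ξ φ (L N) (K N) * (Ed ξ φ (L N) (K N))ᵀ)) /
          (normSq (Wd a T N (L N)) * normSq (Wd a T N (K N))) ∧
      (|δ| * specNorm (Hd a T N (L N) (K N) * (Ed ξ φ (L N) (K N))ᵀ +
            Ed ξ φ (L N) (K N) * (Hd a T N (L N) (K N))ᵀ) +
          δ ^ 2 * specNorm (Ed ξ φ (L N) (K N) * (Ed ξ φ (L N) (K N))ᵀ)) /
          (normSq (Wd a T N (L N)) * normSq (Wd a T N (K N))) ≤
        C * (δ ^ 2 + |δ| / (N : ℝ)) ∧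
      specNorm (Bmat a T ξ φ δ N (L N) (K N)) /
          (normSq (Wd a T N (L N)) * normSq (Wd a T N (K N))) < 1 / 4 := by
  
  obtain ⟨hξ0, hξπ⟩ := hξ
  obtain ⟨hα0, hα1⟩ := hα
  have ha0 : (0:ℝ) < a := lt_trans zero_lt_one ha
  set S : ℝ := 2 / Real.sqrt (2 - 2 * Real.cos ξ) with hSdef
  have hcos1 : Real.cos ξ < 1 := by
    have := Real.cos_lt_cos_of_nonneg_of_le_pi le_rfl hξπ.le hξ0
    simpa using this
  have h2c : (0:ℝ) < 2 - 2 * Real.cos ξ := by linarith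
  have hS0 : 0 ≤ S := by positivity
  set aT : ℝ := a ^ T with haTdef
  have haT1 : 1 ≤ aT := by
    have h := Real.rpow_le_rpow_of_exponent_le ha.le hT.le
    rwa [Real.rpow_zero] at h
  have haT0 : (0:ℝ) < aT := lt_of_lt_of_le one_pos haT1
  set C₂ : ℝ := 2 * S * aT with hC₂def
  have hC₂0 : 0 ≤ C₂ := by positivity
  set β : ℝ := (1 - α) / 2 with hβdef
  have hβ0 : 0 < β := by rw [hβdef]; linarith
  set C : ℝ := max 1 (2 * aT * C₂ / β) with hCdef
  have hC1 : 1 ≤ C := le_max_left _ _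
  have hC0 : 0 < C := lt_of_lt_of_le one_pos hC1
  have hCβ : 2 * aT * C₂ ≤ C * β := by
    have h := le_max_right 1 (2 * aT * C₂ / β)
    rw [← hCdef] at h
    calc 2 * aT * C₂ = (2 * aT * C₂ / β) * β := by field_simp
      _ ≤ C * β := mul_le_mul_of_nonneg_right h hβ0.le
  refine ⟨min 1 (1 / (16 * C)), by positivity, ?_⟩
  have hev : ∀ᶠ n : ℕ in atTop, (L n : ℝ) / n < 1 - β :=
    hlim.eventually_lt_const (by rw [hβdef]; linarith)
  obtain ⟨M₀, hM₀⟩ := eventually_atTop.1 hev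
  refine ⟨max M₀ 3, C, hC0, ?_⟩
  intro δ hδ N hN
  have hN3 : 3 ≤ N := le_of_lt (lt_of_le_of_lt (le_max_right M₀ 3) hN)
  obtain ⟨hL1, hK1, hsum⟩ := hLK N hN3
  have hNpos : (0:ℝ) < N := by
    have : 0 < N := by omega
    exact_mod_cast this
  have hLleN : L N ≤ N := by omega
  have hKleN : K N ≤ N := by omega
  have hLpos : (0:ℝ) < (L N : ℝ) := by
    have : 0 < L N := by omega
    exact_mod_cast this
  have hKpos : (0:ℝ) < (K N : ℝ) := by
    have : 0 < K N := by omega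
    exact_mod_cast this
  have hsumR : (L N : ℝ) + (K N : ℝ) = (N : ℝ) + 1 := by exact_mod_cast hsum
  have hKβ : β * (N : ℝ) ≤ (K N : ℝ) := by
    have h1 : (L N : ℝ) / N < 1 - β := hM₀ N (le_of_lt (lt_of_le_of_lt (le_max_left M₀ 3) hN))
    have h2 : (L N : ℝ) < (1 - β) * N := (div_lt_iff₀ hNpos).1 h1
    have h3 : (1 - β) * N = N - β * N := by ring
    linarith only [h2, h3, hsumR]
  -- entrywise bounds for W
  have hW : ∀ M : ℕ, M ≤ N → ∀ i : Fin M, 1 ≤ Wd a T N M i ∧ Wd a T N M i ≤ aT := by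
    intro M hM i
    have hiN : ((i : ℕ) : ℝ) ≤ (N : ℝ) := by
      have : (i : ℕ) ≤ N := le_trans (Nat.le_of_lt_succ (Nat.lt_succ_of_lt i.isLt)) hM
      exact_mod_cast this
    constructor
    · have h := Real.rpow_le_rpow_of_exponent_le ha.le
        (show (0:ℝ) ≤ ((i : ℕ) : ℝ) * T / N by positivity)
      rwa [Real.rpow_zero] at h
    · apply Real.rpow_le_rpow_of_exponent_le ha.le
      rw [div_le_iff₀ hNpos]
      calc ((i : ℕ) : ℝ) * T ≤ (N : ℝ) * T := mul_le_mul_of_nonneg_right hiN hT.le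
        _ = T * N := mul_comm _ _
  have hWsq : ∀ M : ℕ, M ≤ N →
      (M : ℝ) ≤ normSq (Wd a T N M) ∧ normSq (Wd a T N M) ≤ (M : ℝ) * aT ^ 2 := by
    intro M hM
    constructor
    · calc (M : ℝ) = ∑ _i : Fin M, (1:ℝ) := by simp
        _ ≤ ∑ i, (Wd a T N M i) ^ 2 := by
            refine Finset.sum_le_sum fun i _ => ?_
            have h1 := (hW M hM i).1
            calc (1:ℝ) = 1 * 1 := (one_mul 1).symm
              _ ≤ Wd a T N M i * Wd a T N M i :=
                  mul_le_mul h1 h1 zero_le_one (le_trans zero_le_one h1)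
              _ = Wd a T N M i ^ 2 := (sq (Wd a T N M i)).symm
        _ = normSq (Wd a T N M) := rfl
    · calc normSq (Wd a T N M) = ∑ i, (Wd a T N M i) ^ 2 := rfl
        _ ≤ ∑ _i : Fin M, aT ^ 2 := by
            refine Finset.sum_le_sum fun i _ => ?_
            have h1 := (hW M hM i).1
            have h2 := (hW M hM i).2
            exact pow_le_pow_left₀ (le_trans zero_le_one h1) h2 2
        _ = (M : ℝ) * aT ^ 2 := by simp [Finset.sum_const, Finset.card_univ, mul_comm]
  have hμLK : (L N : ℝ) * (K N : ℝ) ≤ normSq (Wd a T N (L N)) * normSq (Wd a T N (K N)) :=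
    mul_le_mul (hWsq _ hLleN).1 (hWsq _ hKleN).1 hKpos.le
      (le_trans hLpos.le (hWsq _ hLleN).1)
  have hLKpos : (0:ℝ) < (L N : ℝ) * (K N : ℝ) := mul_pos hLpos hKpos
  have hμpos : 0 < normSq (Wd a T N (L N)) * normSq (Wd a T N (K N)) :=
    lt_of_lt_of_le hLKpos hμLK
  -- Hankel factorization
  have hHd : ∀ (i : Fin (L N)) (k : Fin (K N)),
      Hd a T N (L N) (K N) i k = Wd a T N (L N) i * Wd a T N (K N) k := by
    intro i k
    show xdisc a T N ((i : ℕ) + (k : ℕ)) = _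
    unfold xdisc Wd
    rw [← Real.rpow_add ha0]
    congr 1
    push_cast
    ring
  -- weighted cosine sums
  have hs : ∀ θ : ℝ,
      |∑ k : Fin (K N), Wd a T N (K N) k * Real.cos (θ + ξ * (k : ℕ))| ≤ C₂ := by
    intro θ
    have heq : ∑ k : Fin (K N), Wd a T N (K N) k * Real.cos (θ + ξ * (k : ℕ))
        = ∑ k ∈ Finset.range (K N), (a ^ ((k : ℝ) * T / N)) * Real.cos (θ + ξ * k) :=
      (Fin.sum_univ_eq_sum_range (fun k : ℕ => (a ^ ((k : ℝ) * T / N)) * Real.cos (θ + ξ * k))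
        (K N)).symm ▸ rfl
    rw [heq]
    have hres := abel_bound (K N) (fun k : ℕ => a ^ ((k : ℝ) * T / N))
      (fun k : ℕ => Real.cos (θ + ξ * k)) S aT hS0 haT0.le
      (fun x y hxy => by
        apply Real.rpow_le_rpow_of_exponent_le ha.le
        have hxy' : (x : ℝ) ≤ (y : ℝ) := by exact_mod_cast hxy
        gcongr)
      (Real.rpow_nonneg ha0.le _)
      (fun k hk => by
        apply Real.rpow_le_rpow_of_exponent_le ha.le
        have hkN : (k : ℝ) ≤ (N : ℝ) := by
          have : k ≤ N := by omega
          exact_mod_cast this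
        rw [div_le_iff₀ hNpos]
        calc (k : ℝ) * T ≤ (N : ℝ) * T := mul_le_mul_of_nonneg_right hkN hT.le
          _ = T * N := mul_comm _ _)
      (fun m => cos_sum_bound ⟨hξ0, hξπ⟩ θ m)
    calc |∑ k ∈ Finset.range (K N), (a ^ ((k : ℝ) * T / N)) * Real.cos (θ + ξ * k)|
        ≤ 2 * S * aT := hres
      _ = C₂ := rfl
  have hEd : ∀ (i : Fin (L N)) (k : Fin (K N)),
      Ed ξ φ (L N) (K N) i k = Real.cos ((ξ * (i : ℕ) + φ) + ξ * (k : ℕ)) := by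
    intro i k
    show Real.cos _ = _
    congr 1
    push_cast
    ring
  have hsb : ∀ i' : Fin (L N),
      |∑ k : Fin (K N), Wd a T N (K N) k * Ed ξ φ (L N) (K N) i' k| ≤ C₂ := by
    intro i'
    have := hs (ξ * (i' : ℕ) + φ)
    simp only [hEd]
    exact this
  -- entry bounds on the three products
  have hM1a : ∀ (i i' : Fin (L N)),
      |(Hd a T N (L N) (K N) * (Ed ξ φ (L N) (K N))ᵀ) i i'| ≤ aT * C₂ := by
    intro i i'
    rw [Matrix.mul_apply]
    simp only [Matrix.transpose_apply]
    have hentry : ∑ k, Hd a T N (L N) (K N) i k * Ed ξ φ (L N) (K N) i' k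
        = Wd a T N (L N) i * ∑ k, Wd a T N (K N) k * Ed ξ φ (L N) (K N) i' k := by
      rw [Finset.mul_sum]
      refine Finset.sum_congr rfl fun k _ => ?_
      rw [hHd]
      ring
    rw [hentry, abs_mul]
    have hWi := hW (L N) hLleN i
    have h1 : |Wd a T N (L N) i| ≤ aT := by
      rw [abs_of_nonneg (le_trans zero_le_one hWi.1)]; exact hWi.2
    exact mul_le_mul h1 (hsb i') (abs_nonneg _) haT0.le
  have hM1b : ∀ (i i' : Fin (L N)),
      |(Ed ξ φ (L N) (K N) * (Hd a T N (L N) (K N))ᵀ) i i'| ≤ aT * C₂ := by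
    intro i i'
    rw [Matrix.mul_apply]
    simp only [Matrix.transpose_apply]
    have hentry : ∑ k, Ed ξ φ (L N) (K N) i k * Hd a T N (L N) (K N) i' k
        = Wd a T N (L N) i' * ∑ k, Wd a T N (K N) k * Ed ξ φ (L N) (K N) i k := by
      rw [Finset.mul_sum]
      refine Finset.sum_congr rfl fun k _ => ?_
      rw [hHd]
      ring
    rw [hentry, abs_mul]
    have hWi := hW (L N) hLleN i'
    have h1 : |Wd a T N (L N) i'| ≤ aT := by
      rw [abs_of_nonneg (le_trans zero_le_one hWi.1)]; exact hWi.2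
    exact mul_le_mul h1 (hsb i) (abs_nonneg _) haT0.le
  have hM2e : ∀ (i i' : Fin (L N)),
      |(Ed ξ φ (L N) (K N) * (Ed ξ φ (L N) (K N))ᵀ) i i'| ≤ (K N : ℝ) := by
    intro i i'
    rw [Matrix.mul_apply]
    simp only [Matrix.transpose_apply]
    calc |∑ k, Ed ξ φ (L N) (K N) i k * Ed ξ φ (L N) (K N) i' k|
        ≤ ∑ k, |Ed ξ φ (L N) (K N) i k * Ed ξ φ (L N) (K N) i' k| :=
          Finset.abs_sum_le_sum_abs _ _
      _ ≤ ∑ _k : Fin (K N), (1:ℝ) := by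
          refine Finset.sum_le_sum fun k _ => ?_
          rw [abs_mul]
          have e1 : |Ed ξ φ (L N) (K N) i k| ≤ 1 := Real.abs_cos_le_one _
          have e2 : |Ed ξ φ (L N) (K N) i' k| ≤ 1 := Real.abs_cos_le_one _
          calc |Ed ξ φ (L N) (K N) i k| * |Ed ξ φ (L N) (K N) i' k| ≤ 1 * 1 :=
              mul_le_mul e1 e2 (abs_nonneg _) zero_le_one
            _ = 1 := by ring
      _ = (K N : ℝ) := by simp
  -- spectral norm bounds
  have hsqLL : Real.sqrt ((L N : ℝ) * (L N : ℝ)) = (L N : ℝ) := by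
    rw [Real.sqrt_mul_self hLpos.le]
  have hn1a : specNorm (Hd a T N (L N) (K N) * (Ed ξ φ (L N) (K N))ᵀ) ≤ (L N : ℝ) * (aT * C₂) := by
    have := specNorm_le_of_entry_bound _ (aT * C₂) (by positivity) hM1a
    rwa [hsqLL] at this
  have hn1b : specNorm (Ed ξ φ (L N) (K N) * (Hd a T N (L N) (K N))ᵀ) ≤ (L N : ℝ) * (aT * C₂) := by
    have := specNorm_le_of_entry_bound _ (aT * C₂) (by positivity) hM1b
    rwa [hsqLL] at this
  have hn1 : specNorm (Hd a T N (L N) (K N) * (Ed ξ φ (L N) (K N))ᵀ +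
      Ed ξ φ (L N) (K N) * (Hd a T N (L N) (K N))ᵀ) ≤ 2 * (L N : ℝ) * (aT * C₂) := by
    refine (specNorm_add_le _ _).trans ?_
    linarith only [hn1a, hn1b]
  have hn2 : specNorm (Ed ξ φ (L N) (K N) * (Ed ξ φ (L N) (K N))ᵀ) ≤ (L N : ℝ) * (K N : ℝ) := by
    have := specNorm_le_of_entry_bound _ (K N : ℝ) hKpos.le hM2e
    rwa [hsqLL] at this
  have hn1nn := specNorm_nonneg' (Hd a T N (L N) (K N) * (Ed ξ φ (L N) (K N))ᵀ +
      Ed ξ φ (L N) (K N) * (Hd a T N (L N) (K N))ᵀ)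
  have hn2nn := specNorm_nonneg' (Ed ξ φ (L N) (K N) * (Ed ξ φ (L N) (K N))ᵀ)
  -- first inequality
  have hB : specNorm (Bmat a T ξ φ δ N (L N) (K N)) ≤
      |δ| * specNorm (Hd a T N (L N) (K N) * (Ed ξ φ (L N) (K N))ᵀ +
        Ed ξ φ (L N) (K N) * (Hd a T N (L N) (K N))ᵀ) +
      δ ^ 2 * specNorm (Ed ξ φ (L N) (K N) * (Ed ξ φ (L N) (K N))ᵀ) := by
    unfold Bmat
    refine (specNorm_add_le _ _).trans ?_
    have h1 := specNorm_smul_le δ (Hd a T N (L N) (K N) * (Ed ξ φ (L N) (K N))ᵀ +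
      Ed ξ φ (L N) (K N) * (Hd a T N (L N) (K N))ᵀ)
    have h2 := specNorm_smul_le (δ ^ 2) (Ed ξ φ (L N) (K N) * (Ed ξ φ (L N) (K N))ᵀ)
    rw [abs_of_nonneg (sq_nonneg δ)] at h2
    linarith only [h1, h2]
  have goal1 : specNorm (Bmat a T ξ φ δ N (L N) (K N)) /
      (normSq (Wd a T N (L N)) * normSq (Wd a T N (K N))) ≤
      (|δ| * specNorm (Hd a T N (L N) (K N) * (Ed ξ φ (L N) (K N))ᵀ +
          Ed ξ φ (L N) (K N) * (Hd a T N (L N) (K N))ᵀ) +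
        δ ^ 2 * specNorm (Ed ξ φ (L N) (K N) * (Ed ξ φ (L N) (K N))ᵀ)) /
      (normSq (Wd a T N (L N)) * normSq (Wd a T N (K N))) :=
    div_le_div_of_nonneg_right' hB hμpos
  -- second inequality
  have goal2 : (|δ| * specNorm (Hd a T N (L N) (K N) * (Ed ξ φ (L N) (K N))ᵀ +
        Ed ξ φ (L N) (K N) * (Hd a T N (L N) (K N))ᵀ) +
      δ ^ 2 * specNorm (Ed ξ φ (L N) (K N) * (Ed ξ φ (L N) (K N))ᵀ)) /
      (normSq (Wd a T N (L N)) * normSq (Wd a T N (K N))) ≤ C * (δ ^ 2 + |δ| / N) := by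
    have numle : |δ| * specNorm (Hd a T N (L N) (K N) * (Ed ξ φ (L N) (K N))ᵀ +
          Ed ξ φ (L N) (K N) * (Hd a T N (L N) (K N))ᵀ) +
        δ ^ 2 * specNorm (Ed ξ φ (L N) (K N) * (Ed ξ φ (L N) (K N))ᵀ) ≤
        |δ| * (2 * (L N : ℝ) * (aT * C₂)) + δ ^ 2 * ((L N : ℝ) * (K N : ℝ)) :=
      add_le_add (mul_le_mul_of_nonneg_left hn1 (abs_nonneg δ))
        (mul_le_mul_of_nonneg_left hn2 (sq_nonneg δ))
    have step1 : (|δ| * specNorm (Hd a T N (L N) (K N) * (Ed ξ φ (L N) (K N))ᵀ +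
          Ed ξ φ (L N) (K N) * (Hd a T N (L N) (K N))ᵀ) +
        δ ^ 2 * specNorm (Ed ξ φ (L N) (K N) * (Ed ξ φ (L N) (K N))ᵀ)) /
        (normSq (Wd a T N (L N)) * normSq (Wd a T N (K N))) ≤
        (|δ| * (2 * (L N : ℝ) * (aT * C₂)) + δ ^ 2 * ((L N : ℝ) * (K N : ℝ))) /
        ((L N : ℝ) * (K N : ℝ)) :=
      div_le_div₀ (by positivity) numle hLKpos hμLK
    have step2 : (|δ| * (2 * (L N : ℝ) * (aT * C₂)) + δ ^ 2 * ((L N : ℝ) * (K N : ℝ))) /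
        ((L N : ℝ) * (K N : ℝ)) = |δ| * ((2 * aT * C₂) / (K N : ℝ)) + δ ^ 2 := by
      field_simp
    have h1 : (2 * aT * C₂) / (K N : ℝ) ≤ C / N := by
      calc (2 * aT * C₂) / (K N : ℝ) ≤ (C * β) / (β * N) :=
            div_le_div₀ (by positivity) hCβ (by positivity) hKβ
        _ = C / N := by
            rw [div_eq_div_iff (by positivity) (ne_of_gt hNpos)]
            ring
    have step3 : |δ| * ((2 * aT * C₂) / (K N : ℝ)) + δ ^ 2 ≤ C * (δ ^ 2 + |δ| / N) := by
      have h2 : |δ| * ((2 * aT * C₂) / (K N : ℝ)) ≤ |δ| * (C / N) :=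
        mul_le_mul_of_nonneg_left h1 (abs_nonneg δ)
      have h3 : δ ^ 2 ≤ C * δ ^ 2 := le_mul_of_one_le_left (sq_nonneg δ) hC1
      have h4 : |δ| * (C / N) = C * (|δ| / N) := by ring
      have h5 : C * (δ ^ 2 + |δ| / N) = C * δ ^ 2 + C * (|δ| / N) := by ring
      linarith only [h2, h3, h4, h5]
    calc _ ≤ _ := step1
      _ = _ := step2
      _ ≤ _ := step3
  -- third inequality
  have hδ1 : |δ| ≤ 1 := le_trans hδ (min_le_left _ _)
  have hδC : |δ| ≤ 1 / (16 * C) := le_trans hδ (min_le_right _ _)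
  have hN1 : (1:ℝ) ≤ N := by
    have : 1 ≤ N := by omega
    exact_mod_cast this
  have e1 : δ ^ 2 ≤ |δ| := by
    calc δ ^ 2 = δ * δ := sq δ
      _ = |δ| * |δ| := (abs_mul_abs_self δ).symm
      _ ≤ |δ| * 1 := mul_le_mul_of_nonneg_left hδ1 (abs_nonneg δ)
      _ = |δ| := mul_one _
  have e2 : |δ| / (N : ℝ) ≤ |δ| := div_le_self (abs_nonneg δ) hN1
  have e3 : C * (δ ^ 2 + |δ| / N) ≤ C * (2 * |δ|) :=
    mul_le_mul_of_nonneg_left (by linarith only [e1, e2]) hC0.le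
  have e4 : C * (2 * |δ|) ≤ 1 / 8 := by
    calc C * (2 * |δ|) ≤ C * (2 * (1 / (16 * C))) :=
          mul_le_mul_of_nonneg_left (by linarith only [hδC]) hC0.le
      _ = 1 / 8 := by field_simp; ring
  refine ⟨goal1, goal2, ?_⟩
  calc specNorm (Bmat a T ξ φ δ N (L N) (K N)) /
        (normSq (Wd a T N (L N)) * normSq (Wd a T N (K N))) ≤ _ := goal1
    _ ≤ C * (δ ^ 2 + |δ| / N) := goal2
    _ ≤ 1 / 8 := by linarith only [e3, e4]
    _ < 1 / 4 := by norm_num
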